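/- Let (L,*) be a loop with involution and γ a symmetric central element. Then D(L,*,γ) is a Moufang loop if and only if: L is Moufang, [a, cc^*] = 1 for all a,c, [c, c^*] = 1 for all c, [a, c, c^*] = 1 for all a,c, and cc^*c lies in the nucleus of L for every c. -/

import Mathlib

universe u

class Loop (L : Type u) extends Mul L, One L where
  ldiv : L → L → L
  rdiv : L → L → L
  mul_ldiv : ∀ a b : L, a * ldiv a b = b
  ldiv_mul : ∀ a b : L, ldiv a (a * b) = b
  rdiv_mul : ∀ a b : L, rdiv b a * a = b
  mul_rdiv : ∀ a b : L, rdiv (b * a) a = b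
  one_mul : ∀ a : L, 1 * a = a
  mul_one : ∀ a : L, a * 1 = a

section Magma
variable {M : Type u} (mul : M → M → M)

/-- Left nucleus of a magma. -/
def leftNucS : Set M := {a | ∀ x y, mul (mul a x) y = mul a (mul x y)}
/-- Middle nucleus of a magma. -/
def midNucS : Set M := {a | ∀ x y, mul (mul x a) y = mul x (mul a y)}
/-- Right nucleus of a magma. -/
def rightNucS : Set M := {a | ∀ x y, mul (mul x y) a = mul x (mul y a)}
/-- Nucleus of a magma. -/
def nucS : Set M := leftNucS mul ∩ midNucS mul ∩ rightNucS mul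
/-- Commutant (commutative center) of a magma. -/
def commutantS : Set M := {a | ∀ x, mul a x = mul x a}
/-- Center of a magma: the commutant intersected with the nucleus. -/
def centerS : Set M := commutantS mul ∩ nucS mul
end Magma

namespace Loop
variable {L : Type u} [Loop L]

/-- The left inverse `a^λ`, satisfying `a^λ * a = 1`. -/
def linv (a : L) : L := Loop.rdiv 1 a
/-- The right inverse `a^ρ`, satisfying `a * a^ρ = 1`. -/
def rinv (a : L) : L := Loop.ldiv a 1
/-- The commutator `[a,b]`, defined by `a*b = (b*a)*[a,b]`. -/
def comm (a b : L) : L := Loop.ldiv (b*a) (a*b)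
/-- The associator `[a,b,c]`, defined by `(a*b)*c = (a*(b*c))*[a,b,c]`. -/
def assoc (a b c : L) : L := Loop.ldiv (a*(b*c)) ((a*b)*c)

end Loop

/-- The nucleus of a loop. -/
abbrev LNuc (L : Type u) [Loop L] : Set L := nucS (fun x y : L => x * y)
/-- The commutant of a loop. -/
abbrev LCommutant (L : Type u) [Loop L] : Set L := commutantS (fun x y : L => x * y)
/-- The center of a loop. -/
abbrev LCenter (L : Type u) [Loop L] : Set L := centerS (fun x y : L => x * y)

/-- Multiplication of the Cayley–Dickson double `D(L,*,γ) = L ∪ Lj`,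
encoded on `L × Bool` with `(a, false) = a` and `(a, true) = a·j`. -/
def CDmul {L : Type u} [Loop L] (star : L → L) (γ : L) :
    L × Bool → L × Bool → L × Bool
  | (a, false), (b, false) => (a * b, false)
  | (a, false), (b, true)  => (b * a, true)
  | (a, true),  (b, false) => (a * star b, true)
  | (a, true),  (b, true)  => (γ * (star b * a), false)
namespace Stmt18Aux

variable {L : Type u} [Loop L]

/-- The (middle) Moufang law. -/
def Mouf (L : Type u) [Loop L] : Prop :=
  ∀ x y z : L, (z*x)*(y*z) = (z*(x*y))*z

theorem lcancel {a b c : L} (h : a * b = a * c) : b = c := by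
  have h2 := congrArg (fun t => Loop.ldiv a t) h
  simpa only [Loop.ldiv_mul] using h2

theorem rcancel {a b c : L} (h : b * a = c * a) : b = c := by
  have h2 := congrArg (fun t => Loop.rdiv t a) h
  simpa only [Loop.mul_rdiv] using h2

/-- two-sided inverse (in the Moufang case) -/
def iv (c : L) : L := Loop.ldiv c 1

theorem mul_iv (c : L) : c * iv c = 1 := Loop.mul_ldiv c 1

theorem flex (hM : Mouf L) (z y : L) : z*(y*z) = (z*y)*z := by
  have h := hM 1 y z
  rwa [Loop.mul_one, Loop.one_mul] at h

theorem iv_mul (hM : Mouf L) (z : L) : iv z * z = 1 := by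
  have h := flex hM z (iv z)
  rw [mul_iv, Loop.one_mul] at h
  have h2 : z * (iv z * z) = z * 1 := by rw [h, Loop.mul_one]
  exact lcancel h2

theorem lip1 (hM : Mouf L) (z y : L) : z*(iv z*y) = y := by
  have h := hM (iv z) y z
  rw [mul_iv, Loop.one_mul] at h
  exact (rcancel h).symm

theorem iv_iv (hM : Mouf L) (z : L) : iv (iv z) = z := by
  have h : iv z * iv (iv z) = iv z * z := by rw [mul_iv, iv_mul hM]
  exact lcancel h

theorem lip2 (hM : Mouf L) (z y : L) : iv z*(z*y) = y := by
  have h := lip1 hM (iv z) y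
  rwa [iv_iv hM] at h

theorem rip1 (hM : Mouf L) (x z : L) : (x*iv z)*z = x := by
  have h := hM x (iv z) z
  rw [iv_mul hM, Loop.mul_one, ← flex hM] at h
  exact (lcancel h).symm

theorem rip2 (hM : Mouf L) (x z : L) : (x*z)*iv z = x := by
  have h := rip1 hM x (iv z)
  rwa [iv_iv hM] at h

theorem M2 (hM : Mouf L) (x y z : L) : (z*x)*(y*z) = z*((x*y)*z) :=
  (hM x y z).trans (flex hM z (x*y)).symm

theorem lalt (hM : Mouf L) (z y : L) : (z*z)*y = z*(z*y) := by
  have hw : Loop.rdiv y z * z = y := Loop.rdiv_mul z y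
  calc (z*z)*y = (z*z)*(Loop.rdiv y z * z) := by rw [hw]
    _ = (z*(z*Loop.rdiv y z))*z := hM z (Loop.rdiv y z) z
    _ = z*((z*Loop.rdiv y z)*z) := (flex hM z _).symm
    _ = z*(z*(Loop.rdiv y z*z)) := by rw [← flex hM z _]
    _ = z*(z*y) := by rw [hw]

theorem ralt (hM : Mouf L) (y z : L) : (y*z)*z = y*(z*z) := by
  have hw : z * Loop.ldiv z y = y := Loop.mul_ldiv z y
  have h : (z*Loop.ldiv z y)*(z*z) = ((z*Loop.ldiv z y)*z)*z := by
    calc (z*Loop.ldiv z y)*(z*z) = (z*(Loop.ldiv z y*z))*z := hM _ z z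
      _ = ((z*Loop.ldiv z y)*z)*z := by rw [flex hM z _]
  rw [hw] at h
  exact h.symm

theorem inv_rev (hM : Mouf L) (x y : L) : iv (x*y) = iv y * iv x := by
  have h1 : iv (x*y) * x = iv y := by
    have h := lip2 hM (x*y) (iv y)
    rwa [rip2 hM x y] at h
  calc iv (x*y) = (iv (x*y)*x)*iv x := (rip2 hM _ x).symm
    _ = iv y * iv x := by rw [h1]

theorem iv_inj (hM : Mouf L) {a b : L} (h : iv a = iv b) : a = b := by
  have h2 := congrArg iv h
  rwa [iv_iv hM, iv_iv hM] at h2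

theorem Sid (hM : Mouf L) (z x y : L) : (z*(x*z))*(iv z*y) = z*(x*y) := by
  have h1 : z*(x*z) = (z*(x*y))*(iv y*z) := by
    have h := M2 hM (x*y) (iv y) z
    rw [rip2 hM x y] at h
    exact h.symm
  have h2 : iv (iv y*z) = iv z*y := by rw [inv_rev hM, iv_iv hM]
  calc (z*(x*z))*(iv z*y) = ((z*(x*y))*(iv y*z))*(iv (iv y*z)) := by rw [h1, h2]
    _ = z*(x*y) := rip2 hM _ _

theorem LM (hM : Mouf L) (z x y : L) : ((z*x)*z)*y = z*(x*(z*y)) := by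
  have h := Sid hM z x (z*y)
  rw [lip2 hM] at h
  rw [← flex hM z x]
  exact h

theorem RM (hM : Mouf L) (x y z : L) : ((x*z)*y)*z = x*(z*(y*z)) := by
  apply iv_inj hM
  rw [inv_rev hM _ z, inv_rev hM (x*z) y, inv_rev hM x z,
      inv_rev hM x _, inv_rev hM z (y*z), inv_rev hM y z]
  exact (LM hM (iv z) (iv y) (iv x)).symm

theorem q_mid (hM : Mouf L) {q : L} (hq : ∀ x y : L, (q*x)*y = q*(x*y)) :
    ∀ x y : L, (x*q)*y = x*(q*y) := by
  intro x y
  calc (x*q)*y = (x*((q*iv x)*x))*(iv x*(x*y)) := by rw [rip1 hM q x, lip2 hM x y]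
    _ = x*((q*iv x)*(x*y)) := Sid hM x (q*iv x) (x*y)
    _ = x*(q*(iv x*(x*y))) := by rw [hq]
    _ = x*(q*y) := by rw [lip2 hM x y]

theorem q_left_inv (hM : Mouf L) {q : L} (hq : ∀ x y : L, (q*x)*y = q*(x*y)) :
    ∀ x y : L, (iv q*x)*y = iv q*(x*y) := by
  intro x y
  have h := hq (iv q*x) y
  rw [lip1 hM] at h
  have h2 := congrArg (fun t => iv q * t) h
  rw [lip2 hM] at h2
  exact h2.symm

theorem q_right (hM : Mouf L) {q : L} (hq : ∀ x y : L, (q*x)*y = q*(x*y)) :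
    ∀ x y : L, (x*y)*q = x*(y*q) := by
  intro x y
  apply iv_inj hM
  rw [inv_rev hM (x*y) q, inv_rev hM x y, inv_rev hM x (y*q), inv_rev hM y q]
  exact (q_left_inv hM hq (iv y) (iv x)).symm

end Stmt18Aux
namespace Stmt18Aux

variable {L : Type u} [Loop L]

theorem k_eq (hM : Mouf L) {c k n : L} (hn : ∀ a : L, a*n = n*a)
    (h4 : ∀ a : L, (a*c)*k = a*n)
    (hl : ∀ x y : L, ((n*c)*x)*y = (n*c)*(x*y)) :
    k = (n*c)*(iv c*iv c) := by
  have h1 : k = iv c*n := by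
    have h := h4 (iv c)
    rwa [iv_mul hM, Loop.one_mul] at h
  have h2 : (n*c)*(iv c*iv c) = ((n*c)*iv c)*iv c := (hl _ _).symm
  rw [h2, rip2 hM n c]
  exact h1.trans (hn (iv c))

theorem laux (hM : Mouf L) {c k n : L} (hn : ∀ a : L, a*n = n*a)
    (h4 : ∀ a : L, (a*c)*k = a*n)
    (hl : ∀ x y : L, ((n*c)*x)*y = (n*c)*(x*y)) :
    ∀ w : L, k*(c*w) = n*w := by
  intro w
  calc k*(c*w) = ((n*c)*(iv c*iv c))*(c*w) := by rw [← k_eq hM hn h4 hl]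
    _ = (n*c)*((iv c*iv c)*(c*w)) := hl _ _
    _ = (n*c)*(iv c*(iv c*(c*w))) := by rw [lalt hM (iv c)]
    _ = (n*c)*(iv c*w) := by rw [lip2 hM c w]
    _ = ((n*c)*iv c)*w := (hl _ _).symm
    _ = n*w := by rw [rip2 hM n c]

theorem key (hM : Mouf L) {c k n : L} (hn : ∀ a : L, a*n = n*a)
    (h4 : ∀ a : L, (a*c)*k = a*n)
    (hl : ∀ x y : L, ((n*c)*x)*y = (n*c)*(x*y))
    (hm : ∀ x y : L, (x*(n*c))*y = x*((n*c)*y))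
    (hr : ∀ x y : L, (x*y)*(n*c) = x*(y*(n*c))) :
    ∀ u v : L, (u*c)*(k*v) = (u*v)*n := by
  have f2 : c*(n*c) = (n*c)*c := by
    calc c*(n*c) = c*(c*n) := by rw [← hn c]
      _ = (c*c)*n := (lalt hM c n).symm
      _ = n*(c*c) := hn (c*c)
      _ = (n*c)*c := (ralt hM n c).symm
  have C2 : ∀ g : L, c*(g*(n*c)) = (n*c)*(g*c) := by
    intro g
    calc c*(g*(n*c)) = (c*g)*(n*c) := (hr c g).symm
      _ = (c*(g*n))*c := hM g n c
      _ = (c*(n*g))*c := by rw [hn g]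
      _ = (c*n)*(g*c) := (hM n g c).symm
      _ = (n*c)*(g*c) := by rw [hn c]
  have C1 : ∀ u v : L, (u*(n*c))*((iv c*v)*c) = ((u*v)*n)*c := by
    intro u v
    calc (u*(n*c))*((iv c*v)*c) = u*((n*c)*((iv c*v)*c)) := hm _ _
      _ = u*(c*((iv c*v)*(n*c))) := by rw [C2 (iv c*v)]
      _ = u*((c*(iv c*v))*(n*c)) := by rw [← hr c (iv c*v)]
      _ = u*(v*(n*c)) := by rw [lip1 hM c v]
      _ = (u*v)*(n*c) := (hr u v).symm
      _ = (((u*v)*(n*c))*iv c)*c := (rip1 hM _ c).symm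
      _ = ((u*v)*((n*c)*iv c))*c := by rw [hm (u*v) (iv c)]
      _ = ((u*v)*n)*c := by rw [rip2 hM n c]
  intro u v
  calc (u*c)*(k*v) = (u*c)*(((n*c)*(iv c*iv c))*v) := by rw [← k_eq hM hn h4 hl]
    _ = (u*c)*((n*c)*((iv c*iv c)*v)) := by rw [hl (iv c*iv c) v]
    _ = ((u*c)*(n*c))*((iv c*iv c)*v) := (hm _ _).symm
    _ = (u*(c*(n*c)))*((iv c*iv c)*v) := by rw [hr u c]
    _ = (u*((n*c)*c))*((iv c*iv c)*v) := by rw [f2]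
    _ = ((u*(n*c))*c)*((iv c*iv c)*v) := by rw [← hm u c]
    _ = ((u*(n*c))*c)*(iv c*(iv c*v)) := by rw [lalt hM (iv c) v]
    _ = ((u*(n*c))*c)*(iv c*(((iv c*v)*c)*iv c)) := by rw [rip2 hM (iv c*v) c]
    _ = ((((u*(n*c))*c)*iv c)*((iv c*v)*c))*iv c :=
        (RM hM ((u*(n*c))*c) ((iv c*v)*c) (iv c)).symm
    _ = ((u*(n*c))*((iv c*v)*c))*iv c := by rw [rip2 hM (u*(n*c)) c]
    _ = (((u*v)*n)*c)*iv c := by rw [C1 u v]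
    _ = (u*v)*n := rip2 hM _ c

end Stmt18Aux
open Stmt18Aux in
/-- For symmetric central `γ`, the double `D(L,*,γ)` is Moufang iff `L` is
Moufang, `[a,cc^*] = 1`, `[c,c^*] = 1`, `[a,c,c^*] = 1`, and every `cc^*c`
is in the nucleus of `L`. -/
theorem stmt18 {L : Type u} [Loop L] (star : L → L)
    (hstar2 : ∀ a : L, star (star a) = a)
    (hanti : ∀ a b : L, star (a * b) = star b * star a)
    (γ : L) (hγ : γ ∈ LCenter L) (hγs : star γ = γ) :
    (∀ x y z : L × Bool,
        CDmul star γ (CDmul star γ z x) (CDmul star γ y z)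
          = CDmul star γ (CDmul star γ z (CDmul star γ x y)) z) ↔
      ((∀ x y z : L, (z * x) * (y * z) = (z * (x * y)) * z) ∧
       (∀ a c : L, a * (c * star c) = (c * star c) * a) ∧
       (∀ c : L, c * star c = star c * c) ∧
       (∀ a c : L, (a * c) * star c = a * (c * star c)) ∧
       (∀ c : L, (c * star c) * c ∈ LNuc L)) := by
  have hγc : ∀ x : L, γ * x = x * γ := hγ.1
  have hγl : ∀ x y : L, (γ*x)*y = γ*(x*y) := hγ.2.1.1
  have hγm : ∀ x y : L, (x*γ)*y = x*(γ*y) := hγ.2.1.2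
  have gql : ∀ x y : L, x*(γ*y) = γ*(x*y) := by
    intro x y
    rw [← hγm x y, ← hγc x, hγl x y]
  have gdd : ∀ X Y : L, (γ*X)*(γ*Y) = γ*(γ*(X*Y)) := by
    intro X Y
    rw [hγl X (γ*Y), gql X Y]
  constructor
  · -- forward
    intro HQ
    have hM : Mouf L := by
      intro x y z
      have h := HQ (x, false) (y, false) (z, false)
      simp only [CDmul, Prod.mk.injEq, eq_self_iff_true, and_true] at h
      exact h
    have hC' : ∀ u v c : L, (u*star c)*(c*v) = star c*(c*(u*v)) := by
      intro u v c
      have h := HQ (star v, false) (star u, false) (c, true)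
      simp only [CDmul, Prod.mk.injEq, eq_self_iff_true, and_true] at h
      rw [hanti c (star u), hanti (star v) (star u), hstar2, hstar2] at h
      exact lcancel h
    have hG' : ∀ u b c : L, (u*c)*(star c*b) = star c*(c*(u*b)) := by
      intro u b c
      have h := HQ (star u, true) (b, true) (c, true)
      simp only [CDmul, Prod.mk.injEq, eq_self_iff_true, and_true] at h
      rw [hstar2 u, hanti γ (star b * star u), hγs, hanti (star b) (star u),
          hstar2, hstar2] at h
      rw [gdd] at h
      rw [← hγc (u*b), gql c (u*b), gql (star c) (c*(u*b))] at h
      exact lcancel (lcancel h)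
    have hG1 : ∀ u c : L, (u*c)*star c = star c*(c*u) := by
      intro u c
      have h := hG' u 1 c
      rwa [Loop.mul_one, Loop.mul_one] at h
    have h3 : ∀ c : L, c*star c = star c*c := by
      intro c
      have h := hG1 1 c
      rwa [Loop.one_mul, Loop.mul_one] at h
    have hC'' : ∀ u v c : L, (u*star c)*(c*v) = ((u*v)*c)*star c :=
      fun u v c => (hC' u v c).trans (hG1 (u*v) c).symm
    have h4 : ∀ a c : L, (a*c)*star c = a*(c*star c) := by
      intro a c
      have h := hC'' (Loop.rdiv a (star c)) (star c) c
      rw [Loop.rdiv_mul] at h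
      exact h.symm
    have h2 : ∀ a c : L, a*(c*star c) = (c*star c)*a := by
      intro a c
      have h := hC'' c (Loop.ldiv c a) c
      rw [Loop.mul_ldiv] at h
      rw [h4 a c] at h
      exact h.symm
    have hKII : ∀ u v c : L, (u*star c)*(c*v) = (u*v)*(c*star c) :=
      fun u v c => (hC'' u v c).trans (h4 (u*v) c)
    refine ⟨hM, h2, h3, h4, ?_⟩
    intro c
    have hsv : ∀ s v : L, (s*(c*star c))*(c*v) = ((s*c)*v)*(c*star c) := by
      intro s v
      have h := hKII (s*c) v c
      rwa [h4 s c] at h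
    have hstar5 : ∀ s t : L, ((c*star c)*s)*t = (c*star c)*((s*c)*(iv c*t)) := by
      intro s t
      have h := hsv s (iv c*t)
      rw [lip1 hM c t] at h
      calc ((c*star c)*s)*t = (s*(c*star c))*t := by rw [← h2 s c]
        _ = ((s*c)*(iv c*t))*(c*star c) := h
        _ = (c*star c)*((s*c)*(iv c*t)) := h2 _ c
    have hx : ∀ x : L, ((c*star c)*c)*x = (c*star c)*(c*x) := by
      intro x
      have h := hstar5 c x
      rwa [lalt hM c, lip1 hM c x] at h
    have hleft : ∀ x y : L, (((c*star c)*c)*x)*y = ((c*star c)*c)*(x*y) := by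
      intro x y
      calc (((c*star c)*c)*x)*y = ((c*star c)*(c*x))*y := by rw [hx x]
        _ = (c*star c)*(((c*x)*c)*(iv c*y)) := hstar5 (c*x) y
        _ = (c*star c)*(c*(x*(c*(iv c*y)))) := by rw [LM hM c x]
        _ = (c*star c)*(c*(x*y)) := by rw [lip1 hM c y]
        _ = ((c*star c)*c)*(x*y) := (hx (x*y)).symm
    exact ⟨⟨hleft, q_mid hM hleft⟩, q_right hM hleft⟩
  · -- backward
    rintro ⟨hMou, h2, h3, h4, h5⟩
    have hM : Mouf L := hMou
    have keyI : ∀ c u v : L, (u*c)*(star c*v) = (u*v)*(c*star c) := by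
      intro c u v
      obtain ⟨⟨hl, hm⟩, hr⟩ := h5 c
      exact key hM (fun a => h2 a c) (fun a => h4 a c) hl hm hr u v
    have keyII : ∀ c u v : L, (u*star c)*(c*v) = (u*v)*(c*star c) := by
      intro c u v
      have h4' : ∀ a : L, (a*star c)*c = a*(c*star c) := by
        intro a
        have h := h4 a (star c)
        rw [hstar2 c] at h
        rw [← h3 c] at h
        exact h
      have h5' : (c*star c)*star c ∈ LNuc L := by
        have h := h5 (star c)
        rw [hstar2 c] at h
        rw [← h3 c] at h
        exact h
      obtain ⟨⟨hl, hm⟩, hr⟩ := h5'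
      exact key hM (fun a => h2 a c) h4' hl hm hr u v
    have lax : ∀ c w : L, star c*(c*w) = (c*star c)*w := by
      intro c w
      obtain ⟨⟨hl, _⟩, _⟩ := h5 c
      exact laux hM (fun a => h2 a c) (fun a => h4 a c) hl w
    intro x y z
    obtain ⟨a, pa⟩ := x
    obtain ⟨b, pb⟩ := y
    obtain ⟨c, pc⟩ := z
    cases pa <;> cases pb <;> cases pc <;>
      simp only [CDmul, Prod.mk.injEq, eq_self_iff_true, and_true, hanti, hstar2, hγs]
    · -- (f,f,f)
      exact hMou a b c
    · -- (f,f,t)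
      exact congrArg (fun t => γ*t)
        ((keyII c (star b) (star a)).trans
          ((h2 (star b*star a) c).trans (lax c (star b*star a)).symm))
    · -- (f,t,f)
      exact (keyII c b a).trans (h4 (b*a) c).symm
    · -- (f,t,t)
      rw [← hγc (star b*c), gql (c*star a) (star b*c), gql c ((star a*star b)*c)]
      exact congrArg (fun t => γ*t) (M2 hM (star a) (star b) c)
    · -- (t,f,f)
      exact (keyI c a (star b)).trans (h4 (a*star b) c).symm
    · -- (t,f,t)
      rw [gql (c*b) (star a*c), gql c ((b*star a)*c)]
      exact congrArg (fun t => γ*t) (M2 hM b (star a) c)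
    · -- (t,t,f)
      rw [gql c (star b*a), hγl (c*(star b*a)) c]
      exact congrArg (fun t => γ*t) (hMou (star b) a c)
    · -- (t,t,t)
      rw [gdd, ← hγc (star a*b), gql c (star a*b), gql (star c) (c*(star a*b))]
      exact congrArg (fun t => γ*(γ*t))
        ((keyI c (star a) b).trans
          ((h2 (star a*b) c).trans (lax c (star a*b)).symm))
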